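/- arXiv:2110.05608 — 4 statements merged into one kernel-verified Lean document; each statement's English description precedes it below -/
import Mathlib

section
/- Suppose the segregated state ω_lm maximizes the potential over the four group-symmetric states when the size of Group A is N^A (i.e. ρ*_{N^A}(ω_lm) ≥ ρ*_{N^A}(ω') for ω' ∈ {ω_ll, ω_ml, ω_mm}). Then for every integer k ≥ 1, with Group A size N^A + k and all other parameters unchanged, ω_lm is the unique potential maximizer: ρ*_{N^A + k}(ω_lm) > ρ*_{N^A + k}(ω') for every other group-symmetric state ω' ∈ {ω_ll, ω_ml, ω_mm}. (That is, once all-A-on-m segregation is stochastically stable, it remains uniquely stochastically stable under any increase in the size of Group A.) -/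
/-- C(n, 2) = n(n−1)/2, extended to real arguments. -/
noncomputable def C2 (n : ℝ) : ℝ := n * (n - 1) / 2

/-- Potential at the integrated state ω_ll (everyone on m) when Group A has size M. -/
noncomputable def potLL (M NB γA γB : ℝ) : ℝ := C2 M * γA + C2 NB * γB

/-- Potential at the segregated state ω_lm (Group A on m, Group B on ℓ) when
Group A has size M. -/
noncomputable def potLM (M NB γA γB δ : ℝ) : ℝ :=
  C2 M * γA + M * NB * δ + C2 NB * (1 - γB)

/-- Potential at the segregated state ω_ml (Group A on ℓ, Group B on m) when
Group A has size M. -/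
noncomputable def potML (M NB γA γB δ : ℝ) : ℝ :=
  C2 M * (1 - γA) + M * NB * δ + C2 NB * γB

/-- Potential at the integrated state ω_mm (everyone on ℓ) when Group A has size M. -/
noncomputable def potMM (M NB γA γB : ℝ) : ℝ := C2 M * (1 - γA) + C2 NB * (1 - γB)

/-- If the segregated state ω_lm maximizes the potential over the four
group-symmetric states when Group A has size N^A, then for every k ≥ 1, with
Group A size N^A + k, ω_lm is the unique potential maximizer. -/
theorem omega_lm_remains_uniquely_stable_under_growth
    (NA NB : ℕ) (hNA : 2 ≤ NA) (hNB : 2 ≤ NB)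
    (γA γB δ : ℝ) (hγA : γA ∈ Set.Ioo (1/2 : ℝ) 1) (hγB : γB ∈ Set.Ioo (1/2 : ℝ) 1)
    (hδ : 0 < δ)
    (h : potLM NA NB γA γB δ ≥ potLL NA NB γA γB ∧
      potLM NA NB γA γB δ ≥ potML NA NB γA γB δ ∧
      potLM NA NB γA γB δ ≥ potMM NA NB γA γB) :
    ∀ k : ℕ, 1 ≤ k →
      potLM (NA + k : ℕ) NB γA γB δ > potLL (NA + k : ℕ) NB γA γB ∧
      potLM (NA + k : ℕ) NB γA γB δ > potML (NA + k : ℕ) NB γA γB δ ∧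
      potLM (NA + k : ℕ) NB γA γB δ > potMM (NA + k : ℕ) NB γA γB := by
  obtain ⟨h1, h2, h3⟩ := h
  obtain ⟨hA1, hA2⟩ := hγA
  obtain ⟨hB1, hB2⟩ := hγB
  intro k hk
  have hna : (2:ℝ) ≤ (NA:ℝ) := by exact_mod_cast hNA
  have hnb : (2:ℝ) ≤ (NB:ℝ) := by exact_mod_cast hNB
  have hkr : (1:ℝ) ≤ (k:ℝ) := by exact_mod_cast hk
  simp only [potLM, potLL, potML, potMM, C2] at *
  push_cast
  have hk0 : (0:ℝ) < (k:ℝ) := by linarith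
  have hkNB : (0:ℝ) < (k:ℝ) * (NB:ℝ) * δ := by positivity
  have hD : (0:ℝ) < ((k:ℝ) * (2*(NA:ℝ) + (k:ℝ) - 1)) / 2 := by
    apply div_pos (mul_pos hk0 (by linarith)) two_pos
  have hDγ : (0:ℝ) < ((k:ℝ) * (2*(NA:ℝ) + (k:ℝ) - 1)) / 2 * (2*γA - 1) :=
    mul_pos hD (by linarith)
  refine ⟨by nlinarith [hkNB, h1], by nlinarith [hDγ, h2], by nlinarith [hDγ, hkNB, h3]⟩
end

section
/- Suppose the integrated state ω_ll maximizes the potential over the four group-symmetric states when the size of Group A is N^A. Then there exists an integer k̂ ≥ 1 such that for all integers k with 0 ≤ k < k̂, with Group A size N^A + k the state ω_ll maximizes the potential over the four group-symmetric states, and for all integers k ≥ k̂, with Group A size N^A + k the segregated state ω_lm maximizes the potential over the four group-symmetric states. (That is, incrementally increasing the size of Group A preserves integration up to a threshold, after which all-A-on-m segregation becomes stochastically stable forever.) -/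
set_option maxHeartbeats 1000000 in
/-- If the integrated state ω_ll maximizes the potential over the four
group-symmetric states when Group A has size N^A, then there is a threshold
k̂ ≥ 1 such that ω_ll remains a potential maximizer for Group A sizes
N^A + k with k < k̂, and ω_lm is a potential maximizer for all k ≥ k̂. -/
theorem omega_ll_stable_until_threshold_then_omega_lm
    (NA NB : ℕ) (hNA : 2 ≤ NA) (hNB : 2 ≤ NB)
    (γA γB δ : ℝ) (hγA : γA ∈ Set.Ioo (1/2 : ℝ) 1) (hγB : γB ∈ Set.Ioo (1/2 : ℝ) 1)
    (hδ : 0 < δ)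
    (h : potLL NA NB γA γB ≥ potLM NA NB γA γB δ ∧
      potLL NA NB γA γB ≥ potML NA NB γA γB δ ∧
      potLL NA NB γA γB ≥ potMM NA NB γA γB) :
    ∃ khat : ℕ, 1 ≤ khat ∧
      (∀ k : ℕ, k < khat →
        potLL (NA + k : ℕ) NB γA γB ≥ potLM (NA + k : ℕ) NB γA γB δ ∧
        potLL (NA + k : ℕ) NB γA γB ≥ potML (NA + k : ℕ) NB γA γB δ ∧
        potLL (NA + k : ℕ) NB γA γB ≥ potMM (NA + k : ℕ) NB γA γB) ∧
      (∀ k : ℕ, khat ≤ k →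
        potLM (NA + k : ℕ) NB γA γB δ ≥ potLL (NA + k : ℕ) NB γA γB ∧
        potLM (NA + k : ℕ) NB γA γB δ ≥ potML (NA + k : ℕ) NB γA γB δ ∧
        potLM (NA + k : ℕ) NB γA γB δ ≥ potMM (NA + k : ℕ) NB γA γB) := by
  classical
  obtain ⟨hγA1, hγA2⟩ := hγA
  obtain ⟨hγB1, hγB2⟩ := hγB
  have hA2 : (2:ℝ) ≤ (NA:ℝ) := by exact_mod_cast hNA
  have hB2 : (2:ℝ) ≤ (NB:ℝ) := by exact_mod_cast hNB
  have hd : (0:ℝ) < (NB:ℝ) * δ := by positivity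
  have ha : (0:ℝ) < 2*γA - 1 := by linarith
  have hApos : (0:ℝ) < (NA:ℝ) := by linarith
  have h1 : (NA:ℝ) * ((NB:ℝ)*δ) ≤ (NB:ℝ)*((NB:ℝ)-1)/2 * (2*γB - 1) := by
    have := h.1
    simp only [potLL, potLM, C2, ge_iff_le] at this
    nlinarith [this]
  have he : (NB:ℝ)*δ ≤ ((NA:ℝ)-1)*(2*γA-1)/2 := by
    have h2 := h.2.1
    simp only [potLL, potML, C2, ge_iff_le] at h2
    by_contra hcon
    push_neg at hcon
    have := mul_lt_mul_of_pos_left hcon hApos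
    nlinarith [this, h2]
  obtain ⟨n, hn⟩ := exists_nat_gt (((NB:ℝ)*((NB:ℝ)-1)/2 * (2*γB - 1)) / ((NB:ℝ)*δ))
  have hbn : (NB:ℝ)*((NB:ℝ)-1)/2 * (2*γB - 1) < (n:ℝ) * ((NB:ℝ)*δ) := by
    rw [div_lt_iff₀ hd] at hn; linarith
  have hPexE : ∃ m : ℕ, 1 ≤ m ∧
      (NB:ℝ)*((NB:ℝ)-1)/2 * (2*γB - 1) ≤ ((NA:ℝ) + m) * ((NB:ℝ)*δ) := by
    refine ⟨n + 1, by omega, ?_⟩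
    push_cast
    nlinarith [hbn, hd, hA2]
  refine ⟨Nat.find hPexE, (Nat.find_spec hPexE).1, ?_, ?_⟩
  · intro k hk
    have hMb : ((NA:ℝ) + k) * ((NB:ℝ)*δ) ≤ (NB:ℝ)*((NB:ℝ)-1)/2 * (2*γB - 1) := by
      rcases Nat.eq_zero_or_pos k with rfl | hk1
      · simpa using h1
      · have hmin := Nat.find_min hPexE hk
        push_neg at hmin
        exact le_of_lt (hmin hk1)
    have hkA : (0:ℝ) ≤ (k : ℝ) := Nat.cast_nonneg k
    clear hk
    have hMpos : (0:ℝ) < (NA:ℝ) + k := by linarith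
    have hde : (NB:ℝ)*δ ≤ ((NA:ℝ) + k - 1)*(2*γA-1)/2 := by nlinarith [he, ha, hkA]
    have hMd : ((NA:ℝ) + k) * ((NB:ℝ)*δ) ≤ ((NA:ℝ) + k) * (((NA:ℝ) + k - 1)*(2*γA-1)/2) :=
      mul_le_mul_of_nonneg_left hde (le_of_lt hMpos)
    have hq : (0:ℝ) ≤ ((NA:ℝ) + k) * (((NA:ℝ) + k - 1)*(2*γA-1)/2) :=
      le_trans (le_of_lt (mul_pos hMpos hd)) hMd
    have hcb : (0:ℝ) ≤ (NB:ℝ)*((NB:ℝ)-1)/2 * (2*γB - 1) := by nlinarith [hB2, hγB1]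
    refine ⟨?_, ?_, ?_⟩
    · simp only [potLL, potLM, C2, ge_iff_le]; push_cast; nlinarith [hMb]
    · simp only [potLL, potML, C2, ge_iff_le]; push_cast; nlinarith [hMd]
    · simp only [potLL, potMM, C2, ge_iff_le]; push_cast; nlinarith [hq, hcb]
  · intro k hk
    have hkk : ((Nat.find hPexE : ℕ) : ℝ) ≤ (k : ℝ) := by exact_mod_cast hk
    have hbM : (NB:ℝ)*((NB:ℝ)-1)/2 * (2*γB - 1) ≤ ((NA:ℝ) + k) * ((NB:ℝ)*δ) := by
      have hsp := (Nat.find_spec hPexE).2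
      nlinarith [hsp, hd, hkk]
    have hkA : (0:ℝ) ≤ (k : ℝ) := Nat.cast_nonneg k
    have hMpos : (0:ℝ) < (NA:ℝ) + k := by linarith
    have hde : (NB:ℝ)*δ ≤ ((NA:ℝ) + k - 1)*(2*γA-1)/2 := by nlinarith [he, ha, hkA]
    have hMd : ((NA:ℝ) + k) * ((NB:ℝ)*δ) ≤ ((NA:ℝ) + k) * (((NA:ℝ) + k - 1)*(2*γA-1)/2) :=
      mul_le_mul_of_nonneg_left hde (le_of_lt hMpos)
    have hq : (0:ℝ) ≤ ((NA:ℝ) + k) * (((NA:ℝ) + k - 1)*(2*γA-1)/2) :=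
      le_trans (le_of_lt (mul_pos hMpos hd)) hMd
    clear hk hkk
    refine ⟨?_, ?_, ?_⟩
    · simp only [potLL, potLM, C2, ge_iff_le]; push_cast; nlinarith [hbM]
    · simp only [potLM, potML, C2, ge_iff_le]; push_cast; nlinarith [hbM, hMd]
    · simp only [potLM, potMM, C2, ge_iff_le]; push_cast
      nlinarith [hq, mul_pos hMpos hd]
end

section
/- Suppose the segregated state ω_ml maximizes the potential over the four group-symmetric states when Group A has size N^A, and suppose for some integer k ≥ 1, with Group A size N^A + k, it holds that γ_A > (N^B/(N^A + k − 1))·δ + 1/2 while C(N^A + k, 2)·(2γ_A − 1) ≤ C(N^B, 2)·(2γ_B − 1). Then with Group A size N^A + k the integrated state ω_ll maximizes the potential over the four group-symmetric states (in particular, γ_B > (N^A + k)/(N^B − 1)·δ + 1/2 holds automatically). -/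
/-- Suppose ω_ml maximizes the potential when Group A has size N^A, and for
some k ≥ 1, with Group A size N^A + k, γ_A > (N^B/(N^A + k − 1))·δ + 1/2 while
C(N^A + k, 2)·(2γ_A − 1) ≤ C(N^B, 2)·(2γ_B − 1). Then with Group A size N^A + k,
the integrated state ω_ll maximizes the potential over the four group-symmetric
states (and γ_B > ((N^A + k)/(N^B − 1))·δ + 1/2 holds automatically). -/
theorem omega_ml_to_omega_ll_under_growth
    (NA NB : ℕ) (hNA : 2 ≤ NA) (hNB : 2 ≤ NB)
    (γA γB δ : ℝ) (hγA : γA ∈ Set.Ioo (1/2 : ℝ) 1) (hγB : γB ∈ Set.Ioo (1/2 : ℝ) 1)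
    (hδ : 0 < δ)
    (h : potML NA NB γA γB δ ≥ potLL NA NB γA γB ∧
      potML NA NB γA γB δ ≥ potLM NA NB γA γB δ ∧
      potML NA NB γA γB δ ≥ potMM NA NB γA γB)
    (k : ℕ) (hk : 1 ≤ k)
    (hγAbig : γA > ((NB : ℝ) / (((NA : ℝ) + (k : ℝ)) - 1)) * δ + 1/2)
    (hf : C2 ((NA : ℝ) + (k : ℝ)) * (2 * γA - 1) ≤ C2 NB * (2 * γB - 1)) :
    (potLL (NA + k : ℕ) NB γA γB ≥ potLM (NA + k : ℕ) NB γA γB δ ∧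
      potLL (NA + k : ℕ) NB γA γB ≥ potML (NA + k : ℕ) NB γA γB δ ∧
      potLL (NA + k : ℕ) NB γA γB ≥ potMM (NA + k : ℕ) NB γA γB) ∧
    γB > (((NA : ℝ) + (k : ℝ)) / ((NB : ℝ) - 1)) * δ + 1/2 := by
  obtain ⟨hA1, hA2⟩ := hγA
  obtain ⟨hB1, hB2⟩ := hγB
  set m : ℝ := (NA : ℝ) + (k : ℝ) with hm
  clear_value m
  have hNA' : (2:ℝ) ≤ (NA:ℝ) := by exact_mod_cast hNA
  have hNB' : (2:ℝ) ≤ (NB:ℝ) := by exact_mod_cast hNB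
  have hk' : (1:ℝ) ≤ (k:ℝ) := by exact_mod_cast hk
  have hm3 : (3:ℝ) ≤ m := by rw [hm]; linarith
  have hm1 : (0:ℝ) < m - 1 := by linarith
  have hcast : ((NA + k : ℕ) : ℝ) = m := by rw [hm]; push_cast; ring
  have hγ' : (NB : ℝ) / (m - 1) * δ < γA - 1/2 := by linarith
  rw [div_mul_eq_mul_div, div_lt_iff₀ hm1] at hγ'
  -- hγ' : NB * δ < (γA - 1/2) * (m - 1)
  have key : m * NB * δ < C2 m * (2 * γA - 1) := by
    unfold C2
    nlinarith [mul_lt_mul_of_pos_left hγ' (by linarith : (0:ℝ) < m)]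
  have keyB : m * NB * δ < C2 NB * (2 * γB - 1) := lt_of_lt_of_le key hf
  constructor
  · refine ⟨?_, ?_, ?_⟩
    · unfold potLL potLM; rw [hcast]; linarith
    · unfold potLL potML; rw [hcast]; linarith
    · unfold potLL potMM C2; rw [hcast]
      nlinarith [mul_nonneg (mul_nonneg (show (0:ℝ) ≤ m by linarith) (show (0:ℝ) ≤ m - 1 by linarith)) (show (0:ℝ) ≤ 2*γA - 1 by linarith), mul_nonneg (mul_nonneg (show (0:ℝ) ≤ (NB:ℝ) by linarith) (show (0:ℝ) ≤ (NB:ℝ) - 1 by linarith)) (show (0:ℝ) ≤ 2*γB - 1 by linarith)]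
  · rw [gt_iff_lt, ← lt_sub_iff_add_lt, div_mul_eq_mul_div, div_lt_iff₀ (by linarith : (0:ℝ) < (NB:ℝ) - 1)]
    unfold C2 at keyB
    nlinarith
end

section
/- Unlimited growth of Group A eventually leads to segregation: for any parameters N^A, N^B ≥ 2, γ_A, γ_B ∈ (1/2,1), δ > 0, there exists an integer K such that for all integers k ≥ K, with Group A size N^A + k the segregated state ω_lm is the unique potential maximizer over the four group-symmetric states: ρ*_{N^A+k}(ω_lm) > ρ*_{N^A+k}(ω') for every ω' ∈ {ω_ll, ω_ml, ω_mm}. -/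
/-- Unlimited growth of Group A eventually leads to segregation: there exists K
such that for all k ≥ K, with Group A size N^A + k, the segregated state ω_lm
is the unique potential maximizer over the four group-symmetric states. -/
theorem unlimited_growth_leads_to_segregation
    (NA NB : ℕ) (hNA : 2 ≤ NA) (hNB : 2 ≤ NB)
    (γA γB δ : ℝ) (hγA : γA ∈ Set.Ioo (1/2 : ℝ) 1) (hγB : γB ∈ Set.Ioo (1/2 : ℝ) 1)
    (hδ : 0 < δ) :
    ∃ K : ℕ, ∀ k : ℕ, K ≤ k →
      potLM (NA + k : ℕ) NB γA γB δ > potLL (NA + k : ℕ) NB γA γB ∧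
      potLM (NA + k : ℕ) NB γA γB δ > potML (NA + k : ℕ) NB γA γB δ ∧
      potLM (NA + k : ℕ) NB γA γB δ > potMM (NA + k : ℕ) NB γA γB := by
  obtain ⟨hA1, hA2⟩ := hγA
  obtain ⟨hB1, hB2⟩ := hγB
  have hNB2 : (2:ℝ) ≤ (NB:ℝ) := by exact_mod_cast hNB
  have hNA2 : (2:ℝ) ≤ (NA:ℝ) := by exact_mod_cast hNA
  set b : ℝ := C2 (NB:ℝ) * (2*γB - 1) with hb
  obtain ⟨K, hK⟩ := exists_nat_gt (max (b / ((NB:ℝ) * δ)) (2*b/(2*γA-1)))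
  refine ⟨K, fun k hk => ?_⟩
  set M : ℝ := ((NA + k : ℕ) : ℝ) with hM
  have hMK : (K:ℝ) ≤ M := by
    have h1 : (K:ℝ) ≤ (k:ℝ) := by exact_mod_cast hk
    have h2 : (k:ℝ) ≤ M := by
      rw [hM]; push_cast
      linarith [Nat.cast_nonneg (α := ℝ) NA]
    linarith
  have hM2 : (2:ℝ) ≤ M := by
    rw [hM]; push_cast
    linarith [Nat.cast_nonneg (α := ℝ) k]
  have h1 : b / ((NB:ℝ) * δ) < M := lt_of_lt_of_le (lt_of_le_of_lt (le_max_left _ _) hK) hMK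
  have h2 : 2*b/(2*γA-1) < M := lt_of_lt_of_le (lt_of_le_of_lt (le_max_right _ _) hK) hMK
  have hNBδ : (0:ℝ) < (NB:ℝ) * δ := by positivity
  have hb1 : b < M * ((NB:ℝ) * δ) := by
    rwa [div_lt_iff₀ hNBδ] at h1
  have hb2 : 2*b < M * (2*γA-1) := by
    rw [div_lt_iff₀ (by linarith : (0:ℝ) < 2*γA-1)] at h2
    linarith
  simp only [potLL, potLM, potML, potMM, hb, C2] at *
  have hA : (0:ℝ) < 2*γA - 1 := by linarith
  have key2 : M * (2*γA-1) ≤ M * (M-1) * (2*γA-1) := by nlinarith [mul_nonneg (mul_nonneg (by linarith : (0:ℝ) ≤ M) (by linarith : (0:ℝ) ≤ M - 2)) hA.le]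
  have key3 : (0:ℝ) < M * (NB:ℝ) * δ := by positivity
  refine ⟨by nlinarith, by nlinarith, by nlinarith⟩
end
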